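/- Assume D is nonexpansive (λ = 1), the step size satisfies 0 < γ < 1/(L+2τ), there exists x* ∈ E with G(x*) = 0, and there exists R > 0 such that the SD-RED iterates satisfy ‖x^k − x*‖ ≤ R for all k ≥ 0. Then for every t ≥ 1, min_{1 ≤ i ≤ t} ‖G(x^{i−1})‖² ≤ (1/t)·∑_{i=1}^{t} ‖G(x^{i−1})‖² ≤ B₁/t + τσε·B₂, where B₁ = (L+2τ)R²/γ and B₂ = (L+2τ)(2R + γτσε). -/

import Mathlib

set_option maxHeartbeats 1000000

open InnerProductSpace

section Aux
variable {E : Type*} [NormedAddCommGroup E] [InnerProductSpace ℝ E] [CompleteSpace E]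

lemma grad_convex_lb {g : E → ℝ} {g' : E → E}
    (hgconv : ConvexOn ℝ Set.univ g) (hgrad : ∀ x, HasGradientAt g (g' x) x)
    (x y : E) : ⟪g' x, y - x⟫_ℝ ≤ g y - g x := by
  set c : ℝ → E := fun t => x + t • (y - x) with hcdef
  have hc : ∀ t : ℝ, HasDerivAt c (y - x) t :=
    fun t => by simpa [hcdef] using ((hasDerivAt_id t).smul_const (y - x)).const_add x
  have hφ : ∀ t : ℝ, HasDerivAt (g ∘ c) ⟪g' (c t), y - x⟫_ℝ t := by
    intro t
    have h1 : HasFDerivAt g (toDual ℝ E (g' (c t))) (c t) :=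
      hasGradientAt_iff_hasFDerivAt.mp (hgrad (c t))
    simpa [InnerProductSpace.toDual_apply_apply] using h1.comp_hasDerivAt t (hc t)
  have hconv : ConvexOn ℝ Set.univ (g ∘ c) := by
    have h2 := hgconv.comp_affineMap (AffineMap.lineMap x y : ℝ →ᵃ[ℝ] E)
    have : (g ∘ (AffineMap.lineMap x y : ℝ →ᵃ[ℝ] E)) = g ∘ c := by
      funext t
      simp [hcdef, AffineMap.lineMap_apply, Function.comp]
      congr 1
      module
    simpa [this] using h2
  have := hconv.le_slope_of_hasDerivAt (Set.mem_univ (0:ℝ)) (Set.mem_univ (1:ℝ))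
    one_pos (by simpa [hcdef] using hφ 0)
  simpa [slope_def_field, hcdef] using this

lemma grad_descent {g : E → ℝ} {g' : E → E} {L : ℝ} (hL : 0 < L)
    (hgrad : ∀ x, HasGradientAt g (g' x) x)
    (hgLip : ∀ x y, ‖g' x - g' y‖ ≤ L * ‖x - y‖)
    (x y : E) : g y ≤ g x + ⟪g' x, y - x⟫_ℝ + L / 2 * ‖y - x‖ ^ 2 := by
  set c : ℝ → E := fun t => x + t • (y - x) with hcdef
  have hc : ∀ t : ℝ, HasDerivAt c (y - x) t :=
    fun t => by simpa [hcdef] using ((hasDerivAt_id t).smul_const (y - x)).const_add x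
  set A : ℝ := ⟪g' x, y - x⟫_ℝ with hA
  set r : ℝ := ‖y - x‖ with hr
  set h : ℝ → ℝ := fun t => g (c t) - t * A - L / 2 * t ^ 2 * r ^ 2 with hhdef
  have hh : ∀ t : ℝ, HasDerivAt h (⟪g' (c t), y - x⟫_ℝ - A - L / 2 * (2 * t) * r ^ 2) t := by
    intro t
    have h1 : HasFDerivAt g (toDual ℝ E (g' (c t))) (c t) :=
      hasGradientAt_iff_hasFDerivAt.mp (hgrad (c t))
    have h2 : HasDerivAt (g ∘ c) ⟪g' (c t), y - x⟫_ℝ t := by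
      simpa [InnerProductSpace.toDual_apply_apply] using h1.comp_hasDerivAt t (hc t)
    have h3 : HasDerivAt (fun t : ℝ => t * A) A t := by
      simpa using (hasDerivAt_id t).mul_const A
    have h4 : HasDerivAt (fun t : ℝ => L / 2 * t ^ 2 * r ^ 2) (L / 2 * (2 * t) * r ^ 2) t := by
      have := ((hasDerivAt_pow 2 t).const_mul (L / 2)).mul_const (r ^ 2)
      simpa [mul_comm, mul_assoc, mul_left_comm] using this
    exact (h2.sub h3).sub h4
  have key : ∀ t ∈ Set.Ioo (0:ℝ) 1, deriv h t ≤ 0 := by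
    intro t ht
    rw [(hh t).deriv]
    have hct : c t - x = t • (y - x) := by simp [hcdef]
    have h5 : ⟪g' (c t), y - x⟫_ℝ - A = ⟪g' (c t) - g' x, y - x⟫_ℝ := by
      rw [inner_sub_left]
    have h6 : ⟪g' (c t) - g' x, y - x⟫_ℝ ≤ L * t * r ^ 2 := by
      calc ⟪g' (c t) - g' x, y - x⟫_ℝ ≤ ‖g' (c t) - g' x‖ * ‖y - x‖ :=
            real_inner_le_norm _ _
        _ ≤ (L * ‖c t - x‖) * ‖y - x‖ := by
            have := hgLip (c t) x
            nlinarith [norm_nonneg (y - x)]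
        _ = L * t * r ^ 2 := by
            rw [hct, norm_smul]
            simp [abs_of_pos ht.1, ← hr]
            ring
    rw [h5]
    nlinarith
  have hanti : AntitoneOn h (Set.Icc (0:ℝ) 1) := by
    apply antitoneOn_of_deriv_nonpos (convex_Icc 0 1)
    · exact Continuous.continuousOn (by
        have : Continuous h := by
          have : Differentiable ℝ h := fun t => (hh t).differentiableAt
          exact this.continuous
        exact this)
    · intro t _
      exact (hh t).differentiableAt.differentiableWithinAt
    · intro t ht
      exact key t (by simpa [interior_Icc] using ht)
  have := hanti (Set.mem_Icc.mpr ⟨le_refl 0, zero_le_one⟩)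
    (Set.mem_Icc.mpr ⟨zero_le_one, le_refl 1⟩) zero_le_one
  have hc0 : c 0 = x := by simp [hcdef]
  have hc1 : c 1 = y := by simp [hcdef]
  simp [hhdef, hc0, hc1] at this
  have hrr : ‖y - x‖ ^ 2 = r ^ 2 := by rw [hr]
  nlinarith [this]

lemma grad_bh {g : E → ℝ} {g' : E → E} {L : ℝ} (hL : 0 < L)
    (hgconv : ConvexOn ℝ Set.univ g) (hgrad : ∀ x, HasGradientAt g (g' x) x)
    (hgLip : ∀ x y, ‖g' x - g' y‖ ≤ L * ‖x - y‖)
    (x y : E) : g x + ⟪g' x, y - x⟫_ℝ + 1 / (2 * L) * ‖g' y - g' x‖ ^ 2 ≤ g y := by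
  set z : E := y - (1 / L) • (g' y - g' x) with hz
  have h1 := grad_convex_lb hgconv hgrad x z
  have h2 := grad_descent hL hgrad hgLip y z
  have hzx : z - x = (y - x) - (1 / L) • (g' y - g' x) := by rw [hz]; abel
  have hzy : z - y = -((1 / L) • (g' y - g' x)) := by rw [hz]; abel
  have e1 : ⟪g' x, z - x⟫_ℝ = ⟪g' x, y - x⟫_ℝ - (1 / L) * ⟪g' x, g' y - g' x⟫_ℝ := by
    rw [hzx, inner_sub_right, real_inner_smul_right]
  have e2 : ⟪g' y, z - y⟫_ℝ = -((1 / L) * ⟪g' y, g' y - g' x⟫_ℝ) := by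
    rw [hzy, inner_neg_right, real_inner_smul_right]
  have e3 : ‖z - y‖ ^ 2 = (1 / L) ^ 2 * ‖g' y - g' x‖ ^ 2 := by
    rw [hzy, norm_neg, norm_smul]
    rw [Real.norm_eq_abs, abs_of_pos (by positivity : (0:ℝ) < 1 / L)]
    ring
  have e4 : ⟪g' y, g' y - g' x⟫_ℝ - ⟪g' x, g' y - g' x⟫_ℝ = ‖g' y - g' x‖ ^ 2 := by
    rw [← inner_sub_left, real_inner_self_eq_norm_sq]
  rw [e1] at h1
  rw [e2, e3] at h2
  have hL' : L ≠ 0 := ne_of_gt hL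
  have k1 : (1 / L) * ⟪g' x, g' y - g' x⟫_ℝ - (1 / L) * ⟪g' y, g' y - g' x⟫_ℝ
      = -((1 / L) * ‖g' y - g' x‖ ^ 2) := by
    rw [← mul_sub, show ⟪g' x, g' y - g' x⟫_ℝ - ⟪g' y, g' y - g' x⟫_ℝ
      = -(⟪g' y, g' y - g' x⟫_ℝ - ⟪g' x, g' y - g' x⟫_ℝ) from by ring, e4]
    ring
  have k2 : L / 2 * ((1 / L) ^ 2 * ‖g' y - g' x‖ ^ 2) = 1 / (2 * L) * ‖g' y - g' x‖ ^ 2 := by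
    field_simp
  have k3 : 1 / (2 * L) * ‖g' y - g' x‖ ^ 2 + 1 / (2 * L) * ‖g' y - g' x‖ ^ 2
      = (1 / L) * ‖g' y - g' x‖ ^ 2 := by field_simp; ring
  linarith [h1, h2]

lemma grad_coco {g : E → ℝ} {g' : E → E} {L : ℝ} (hL : 0 < L)
    (hgconv : ConvexOn ℝ Set.univ g) (hgrad : ∀ x, HasGradientAt g (g' x) x)
    (hgLip : ∀ x y, ‖g' x - g' y‖ ≤ L * ‖x - y‖)
    (x y : E) : (1 / L) * ‖g' x - g' y‖ ^ 2 ≤ ⟪g' x - g' y, x - y⟫_ℝ := by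
  have h1 := grad_bh hL hgconv hgrad hgLip x y
  have h2 := grad_bh hL hgconv hgrad hgLip y x
  have e1 : ⟪g' x, y - x⟫_ℝ + ⟪g' y, x - y⟫_ℝ = -⟪g' x - g' y, x - y⟫_ℝ := by
    have : ⟪g' x, y - x⟫_ℝ = -⟪g' x, x - y⟫_ℝ := by
      rw [← inner_neg_right]; congr 1; abel
    rw [this, inner_sub_left]; ring
  have e2 : ‖g' x - g' y‖ = ‖g' y - g' x‖ := norm_sub_rev _ _
  have e2' : ‖g' x - g' y‖ ^ 2 = ‖g' y - g' x‖ ^ 2 := by rw [norm_sub_rev]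
  rw [e2'] at h2 ⊢
  have hL' : L ≠ 0 := ne_of_gt hL
  have k3 : 1 / (2 * L) * ‖g' y - g' x‖ ^ 2 + 1 / (2 * L) * ‖g' y - g' x‖ ^ 2
      = (1 / L) * ‖g' y - g' x‖ ^ 2 := by field_simp; ring
  linarith [h1, h2]

lemma nonexp_coco {D : E → E} (hD : ∀ x y, ‖D x - D y‖ ≤ ‖x - y‖) (x y : E) :
    (1 / 2) * ‖(x - D x) - (y - D y)‖ ^ 2 ≤ ⟪(x - D x) - (y - D y), x - y⟫_ℝ := by
  set u : E := x - y with hu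
  set v : E := D x - D y with hv
  have huv : (x - D x) - (y - D y) = u - v := by rw [hu, hv]; abel
  rw [huv]
  have h1 : ‖v‖ ≤ ‖u‖ := hD x y
  have h2 : ‖u - v‖ ^ 2 = ‖u‖ ^ 2 - 2 * ⟪u, v⟫_ℝ + ‖v‖ ^ 2 := norm_sub_sq_real u v
  have h3 : ⟪u - v, u⟫_ℝ = ‖u‖ ^ 2 - ⟪u, v⟫_ℝ := by
    rw [inner_sub_left, real_inner_self_eq_norm_sq, real_inner_comm]
  rw [h3]
  nlinarith [h1, norm_nonneg u, norm_nonneg v]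

lemma G_coco {g : E → ℝ} {g' D G : E → E} {L τ : ℝ} (hL : 0 < L) (hτ : 0 < τ)
    (hgconv : ConvexOn ℝ Set.univ g) (hgrad : ∀ x, HasGradientAt g (g' x) x)
    (hgLip : ∀ x y, ‖g' x - g' y‖ ≤ L * ‖x - y‖)
    (hD : ∀ x y, ‖D x - D y‖ ≤ ‖x - y‖)
    (hG : ∀ x, G x = g' x + τ • (x - D x))
    (x y : E) : (1 / (L + 2 * τ)) * ‖G x - G y‖ ^ 2 ≤ ⟪G x - G y, x - y⟫_ℝ := by
  set a : E := g' x - g' y with ha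
  set b : E := (x - D x) - (y - D y) with hb
  have hGxy : G x - G y = a + τ • b := by
    rw [hG x, hG y, ha, hb, smul_sub, smul_sub, smul_sub]
    module
  have h1 := grad_coco hL hgconv hgrad hgLip x y
  have h2 := nonexp_coco hD x y
  have hM : 0 < L + 2 * τ := by linarith
  have hA : ‖a‖ ^ 2 ≤ L * ⟪a, x - y⟫_ℝ := by
    rw [div_mul_eq_mul_div, one_mul, div_le_iff₀ hL] at h1
    linarith
  have hB : ‖b‖ ^ 2 ≤ 2 * ⟪b, x - y⟫_ℝ := by
    rw [div_mul_eq_mul_div, one_mul, div_le_iff₀ (by norm_num : (0:ℝ) < 2)] at h2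
    linarith
  have hinner : ⟪G x - G y, x - y⟫_ℝ = ⟪a, x - y⟫_ℝ + τ * ⟪b, x - y⟫_ℝ := by
    rw [hGxy, inner_add_left, real_inner_smul_left]
  have hnorm : ‖G x - G y‖ ≤ ‖a‖ + τ * ‖b‖ :=
    calc ‖G x - G y‖ = ‖a + τ • b‖ := by rw [hGxy]
      _ ≤ ‖a‖ + ‖τ • b‖ := norm_add_le _ _
      _ = ‖a‖ + τ * ‖b‖ := by rw [norm_smul, Real.norm_eq_abs, abs_of_pos hτ]
  have key : ‖G x - G y‖ ^ 2 ≤ (‖a‖ + τ * ‖b‖) ^ 2 := by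
    nlinarith [norm_nonneg (G x - G y), hnorm, norm_nonneg a, norm_nonneg b, hτ.le,
      mul_nonneg hτ.le (norm_nonneg b)]
  have amgm : L * (‖a‖ + τ * ‖b‖) ^ 2 ≤ (L + 2 * τ) * (‖a‖ ^ 2 + (L * τ / 2) * ‖b‖ ^ 2) := by
    nlinarith [mul_nonneg hτ.le (sq_nonneg (2 * ‖a‖ - L * ‖b‖))]
  rw [hinner, div_mul_eq_mul_div, one_mul, div_le_iff₀ hM]
  have final : L * ‖G x - G y‖ ^ 2 ≤ L * ((⟪a, x - y⟫_ℝ + τ * ⟪b, x - y⟫_ℝ) * (L + 2 * τ)) := by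
    calc L * ‖G x - G y‖ ^ 2 ≤ L * (‖a‖ + τ * ‖b‖) ^ 2 :=
          mul_le_mul_of_nonneg_left key hL.le
      _ ≤ (L + 2 * τ) * (‖a‖ ^ 2 + (L * τ / 2) * ‖b‖ ^ 2) := amgm
      _ ≤ (L + 2 * τ) * ((L * ⟪a, x - y⟫_ℝ) + (L * τ / 2) * (2 * ⟪b, x - y⟫_ℝ)) := by
          apply mul_le_mul_of_nonneg_left _ hM.le
          have := mul_le_mul_of_nonneg_left hB (by positivity : (0:ℝ) ≤ L * τ / 2)
          linarith [hA, this]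
      _ = L * ((⟪a, x - y⟫_ℝ + τ * ⟪b, x - y⟫_ℝ) * (L + 2 * τ)) := by ring
  exact le_of_mul_le_mul_left final hL

end Aux

/-- SD-RED with a mismatched prior under a nonexpansive true prior (Theorem 2):
the running minimum/average of `‖G(xᵏ)‖²` is bounded by `B₁/t + τσε·B₂`. -/
theorem sdred_nonexpansive_error_bound {n : ℕ}
    (g : EuclideanSpace ℝ (Fin n) → ℝ)
    (g' D Dh G Gh : EuclideanSpace ℝ (Fin n) → EuclideanSpace ℝ (Fin n))
    (L σ ε τ γ R : ℝ)
    (hL : 0 < L)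
    (hgconv : ConvexOn ℝ Set.univ g)
    (hgrad : ∀ x, HasGradientAt g (g' x) x)
    (hgLip : ∀ x y, ‖g' x - g' y‖ ≤ L * ‖x - y‖)
    (hD : ∀ x y, ‖D x - D y‖ ≤ ‖x - y‖)
    (hσ : 0 < σ) (hε : 0 < ε)
    (hmis : ∀ x, ‖Dh x - D x‖ ≤ σ * ε)
    (hτ : 0 < τ)
    (hG : ∀ x, G x = g' x + τ • (x - D x))
    (hGh : ∀ x, Gh x = g' x + τ • (x - Dh x))
    (xs : ℕ → EuclideanSpace ℝ (Fin n))
    (hiter : ∀ k, xs (k + 1) = xs k - γ • Gh (xs k))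
    (hγ0 : 0 < γ) (hγ : γ < 1 / (L + 2 * τ))
    (xstar : EuclideanSpace ℝ (Fin n)) (hstar : G xstar = 0)
    (hR : 0 < R) (hbound : ∀ k : ℕ, ‖xs k - xstar‖ ≤ R) :
    ∀ t : ℕ, ∀ ht : 1 ≤ t,
      (Finset.range t).inf'
          (Finset.nonempty_range_iff.mpr (Nat.one_le_iff_ne_zero.mp ht))
          (fun i => ‖G (xs i)‖ ^ 2)
        ≤ (1 / (t : ℝ)) * ∑ i ∈ Finset.range t, ‖G (xs i)‖ ^ 2 ∧
      (1 / (t : ℝ)) * ∑ i ∈ Finset.range t, ‖G (xs i)‖ ^ 2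
        ≤ ((L + 2 * τ) * R ^ 2 / γ) / (t : ℝ)
            + τ * σ * ε * ((L + 2 * τ) * (2 * R + γ * τ * σ * ε)) := by
  set M : ℝ := L + 2 * τ with hMdef
  have hM : 0 < M := by rw [hMdef]; linarith
  set s : ℝ := τ * (σ * ε) with hsdef
  have hs : 0 < s := by positivity
  have hγM : γ * M ≤ 1 := by
    rw [lt_div_iff₀ hM] at hγ
    linarith
  have hco := G_coco hL hτ hgconv hgrad hgLip hD hG
  -- error bound: Gh x - G x has norm ≤ s
  have herr : ∀ x, ‖Gh x - G x‖ ≤ s := by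
    intro x
    have h0 : Gh x - G x = τ • (D x - Dh x) := by
      rw [hGh x, hG x, smul_sub, smul_sub]
      module
    rw [h0, norm_smul, Real.norm_eq_abs, abs_of_pos hτ, hsdef]
    have : ‖D x - Dh x‖ = ‖Dh x - D x‖ := norm_sub_rev _ _
    rw [this]
    exact mul_le_mul_of_nonneg_left (hmis x) hτ.le
  -- per-step descent
  have step : ∀ k : ℕ, ‖xs (k + 1) - xstar‖ ^ 2
      ≤ ‖xs k - xstar‖ ^ 2 - (γ / M) * ‖G (xs k)‖ ^ 2 + (2 * γ * s * R + γ ^ 2 * s ^ 2) := by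
    intro k
    set d := xs k - xstar with hd
    set u := G (xs k) with hu
    set e := Gh (xs k) - G (xs k) with he
    have hxe : xs (k + 1) - xstar = (d - γ • u) - γ • e := by
      rw [hiter k, hd, hu, he, smul_sub]
      module
    have hcoco : (1 / M) * ‖u‖ ^ 2 ≤ ⟪u, d⟫_ℝ := by
      have := hco (xs k) xstar
      rw [hstar, sub_zero] at this
      exact this
    have h1 : ‖d - γ • u‖ ^ 2 = ‖d‖ ^ 2 - 2 * γ * ⟪d, u⟫_ℝ + γ ^ 2 * ‖u‖ ^ 2 := by
      rw [norm_sub_sq_real, real_inner_smul_right, norm_smul, Real.norm_eq_abs,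
        abs_of_pos hγ0]
      ring
    have h2 : ‖d - γ • u‖ ^ 2 ≤ ‖d‖ ^ 2 - (γ / M) * ‖u‖ ^ 2 := by
      rw [h1, real_inner_comm u d]
      have hγle : γ ≤ 1 / M := (le_div_iff₀ hM).mpr hγM
      have hγ2 : γ ^ 2 * ‖u‖ ^ 2 ≤ (γ / M) * ‖u‖ ^ 2 := by
        apply mul_le_mul_of_nonneg_right _ (sq_nonneg _)
        rw [pow_two, div_eq_mul_one_div]
        exact mul_le_mul_of_nonneg_left hγle hγ0.le
      have hip : 2 * γ * ((1 / M) * ‖u‖ ^ 2) ≤ 2 * γ * ⟪u, d⟫_ℝ := by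
        apply mul_le_mul_of_nonneg_left hcoco (by positivity)
      have : 2 * γ * ((1 / M) * ‖u‖ ^ 2) = 2 * (γ / M) * ‖u‖ ^ 2 := by ring
      linarith [hγ2, hip, this]
    have h3 : ‖d - γ • u‖ ≤ R := by
      have hdR : ‖d‖ ≤ R := hbound k
      have : ‖d - γ • u‖ ^ 2 ≤ R ^ 2 := by
        have hterm : 0 ≤ (γ / M) * ‖u‖ ^ 2 := by positivity
        nlinarith [h2, hdR, norm_nonneg d]
      nlinarith [norm_nonneg (d - γ • u), this, hR]
    have h4 : ‖γ • e‖ ≤ γ * s := by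
      rw [norm_smul, Real.norm_eq_abs, abs_of_pos hγ0]
      exact mul_le_mul_of_nonneg_left (herr (xs k)) hγ0.le
    have h5 : ‖(d - γ • u) - γ • e‖ ^ 2
        ≤ ‖d - γ • u‖ ^ 2 + 2 * (γ * s) * R + (γ * s) ^ 2 := by
      rw [norm_sub_sq_real]
      have hip : |⟪d - γ • u, γ • e⟫_ℝ| ≤ ‖d - γ • u‖ * ‖γ • e‖ := abs_real_inner_le_norm _ _
      have hb1 : ‖d - γ • u‖ * ‖γ • e‖ ≤ R * (γ * s) := by
        apply mul_le_mul h3 h4 (norm_nonneg _) hR.le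
      have hb2 : ‖γ • e‖ ^ 2 ≤ (γ * s) ^ 2 :=
        pow_le_pow_left₀ (norm_nonneg _) h4 2
      have h9 := (abs_le.mp hip).1
      linarith [hb1, hb2, h9]
    rw [hxe]
    calc ‖(d - γ • u) - γ • e‖ ^ 2 ≤ ‖d - γ • u‖ ^ 2 + 2 * (γ * s) * R + (γ * s) ^ 2 := h5
      _ ≤ (‖d‖ ^ 2 - (γ / M) * ‖u‖ ^ 2) + 2 * (γ * s) * R + (γ * s) ^ 2 := by linarith [h2]
      _ = ‖d‖ ^ 2 - (γ / M) * ‖u‖ ^ 2 + (2 * γ * s * R + γ ^ 2 * s ^ 2) := by ring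
  -- telescoping
  have tele : ∀ t : ℕ, (γ / M) * ∑ i ∈ Finset.range t, ‖G (xs i)‖ ^ 2
      ≤ R ^ 2 + t * (2 * γ * s * R + γ ^ 2 * s ^ 2) := by
    intro t
    have key : ∀ t : ℕ, (γ / M) * ∑ i ∈ Finset.range t, ‖G (xs i)‖ ^ 2 + ‖xs t - xstar‖ ^ 2
        ≤ ‖xs 0 - xstar‖ ^ 2 + t * (2 * γ * s * R + γ ^ 2 * s ^ 2) := by
      intro t
      induction t with
      | zero => simp
      | succ m ih =>
        rw [Finset.sum_range_succ, mul_add]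
        have := step m
        push_cast
        push_cast at ih
        linarith [this, ih]
    have h0 : ‖xs 0 - xstar‖ ^ 2 ≤ R ^ 2 := by nlinarith [hbound 0, norm_nonneg (xs 0 - xstar)]
    have := key t
    nlinarith [sq_nonneg ‖xs t - xstar‖, norm_nonneg (xs t - xstar)]
  intro t ht
  have htpos : (0:ℝ) < t := by exact_mod_cast ht
  constructor
  · -- min ≤ average
    have hinf : ∀ i ∈ Finset.range t, (Finset.range t).inf'
        (Finset.nonempty_range_iff.mpr (Nat.one_le_iff_ne_zero.mp ht))
        (fun i => ‖G (xs i)‖ ^ 2) ≤ ‖G (xs i)‖ ^ 2 :=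
      fun i hi => Finset.inf'_le _ hi
    have hsum : (t : ℝ) * ((Finset.range t).inf'
        (Finset.nonempty_range_iff.mpr (Nat.one_le_iff_ne_zero.mp ht))
        (fun i => ‖G (xs i)‖ ^ 2)) ≤ ∑ i ∈ Finset.range t, ‖G (xs i)‖ ^ 2 := by
      calc (t : ℝ) * _ = ∑ _i ∈ Finset.range t, (Finset.range t).inf'
            (Finset.nonempty_range_iff.mpr (Nat.one_le_iff_ne_zero.mp ht))
            (fun i => ‖G (xs i)‖ ^ 2) := by
            rw [Finset.sum_const, Finset.card_range]; ring
        _ ≤ ∑ i ∈ Finset.range t, ‖G (xs i)‖ ^ 2 := Finset.sum_le_sum hinf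
    have h7 := mul_le_mul_of_nonneg_left hsum (by positivity : (0:ℝ) ≤ 1 / t)
    have h8 : (1 / (t:ℝ)) * ((t:ℝ) * ((Finset.range t).inf'
        (Finset.nonempty_range_iff.mpr (Nat.one_le_iff_ne_zero.mp ht))
        (fun i => ‖G (xs i)‖ ^ 2)))
        = (Finset.range t).inf'
        (Finset.nonempty_range_iff.mpr (Nat.one_le_iff_ne_zero.mp ht))
        (fun i => ‖G (xs i)‖ ^ 2) := by
      field_simp
    linarith [h7, h8]
  · -- average bound
    have hS : ∑ i ∈ Finset.range t, ‖G (xs i)‖ ^ 2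
        ≤ (M / γ) * (R ^ 2 + t * (2 * γ * s * R + γ ^ 2 * s ^ 2)) := by
      calc ∑ i ∈ Finset.range t, ‖G (xs i)‖ ^ 2
          = (M / γ) * ((γ / M) * ∑ i ∈ Finset.range t, ‖G (xs i)‖ ^ 2) := by
            field_simp
        _ ≤ (M / γ) * (R ^ 2 + t * (2 * γ * s * R + γ ^ 2 * s ^ 2)) :=
            mul_le_mul_of_nonneg_left (tele t) (by positivity)
    calc (1 / (t:ℝ)) * ∑ i ∈ Finset.range t, ‖G (xs i)‖ ^ 2
        ≤ (1 / (t:ℝ)) * ((M / γ) * (R ^ 2 + t * (2 * γ * s * R + γ ^ 2 * s ^ 2))) :=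
          mul_le_mul_of_nonneg_left hS (by positivity)
      _ = ((L + 2 * τ) * R ^ 2 / γ) / (t : ℝ)
            + τ * σ * ε * ((L + 2 * τ) * (2 * R + γ * τ * σ * ε)) := by
          rw [hsdef, hMdef]
          field_simp
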